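/- Let ⊢⊣, → be relations on a set A such that ⊢⊣ is symmetric and → ∘ ⊢⊣* is well-founded. Let ⇒ = → ∪ ⊢⊣ and let ⇐ be the inverse of ⇒. Then → is Church-Rosser modulo ⊢⊣* if and only if both (i) ← ∘ → ⊆ ⇒* ∘ ⇐*, and (ii) ⊢⊣ ∘ → ⊆ → ∘ ⇒* ∘ ⇐*. -/

import Mathlib

namespace CRMproof

open Relation

/-! ### Generic one-step multiset order -/

variable {α : Type*}

/-- One-step multiset order: remove one element, add finitely many smaller ones. -/
def MLt (lt : α → α → Prop) (M' M : Multiset α) : Prop :=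
  ∃ x K N, M = x ::ₘ N ∧ M' = K + N ∧ ∀ k ∈ K, lt k x

theorem MLt.cons {lt : α → α → Prop} {M' M : Multiset α} (a : α) (h : MLt lt M' M) :
    MLt lt (a ::ₘ M') (a ::ₘ M) := by
  obtain ⟨x, K, N, rfl, rfl, hK⟩ := h
  exact ⟨x, K, a ::ₘ N, Multiset.cons_swap a x N, (Multiset.add_cons a K N).symm, hK⟩

theorem MLt.erase {lt : α → α → Prop} (a : α) (M : Multiset α) : MLt lt M (a ::ₘ M) :=
  ⟨a, 0, M, rfl, (zero_add M).symm, by simp⟩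

section
variable {lt : α → α → Prop}

private theorem acc_add (a : α)
    (H : ∀ b, lt b a → ∀ M, Acc (MLt lt) M → Acc (MLt lt) (b ::ₘ M)) :
    ∀ K, (∀ k ∈ K, lt k a) → ∀ M : Multiset α, Acc (MLt lt) M → Acc (MLt lt) (K + M) := by
  intro K
  induction K using Multiset.induction with
  | empty => intro _ M hM; simpa using hM
  | cons b K' ih =>
    intro hK M hM
    rw [Multiset.cons_add]
    exact H b (hK b (Multiset.mem_cons_self b K')) _
      (ih (fun k hk => hK k (Multiset.mem_cons_of_mem hk)) M hM)

private theorem acc_cons (wflt : WellFounded lt) :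
    ∀ a (M : Multiset α), Acc (MLt lt) M → Acc (MLt lt) (a ::ₘ M) := by
  intro a
  induction a using wflt.induction with
  | _ a iha =>
    intro M hM
    induction hM with
    | intro M hM ihM =>
      constructor
      intro M' hM'
      obtain ⟨x, K, N, hdec, rfl, hK⟩ := hM'
      rcases Multiset.cons_eq_cons.mp hdec with ⟨rfl, rfl⟩ | ⟨hne, N', hMN', rfl⟩
      · exact acc_add a iha K hK M (Acc.intro M hM)
      · have h1 : MLt lt (K + N') M := ⟨x, K, N', hMN', rfl, hK⟩
        have h2 := ihM (K + N') h1
        rw [Multiset.add_cons]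
        exact h2

theorem MLt.wf (wflt : WellFounded lt) : WellFounded (MLt lt) := by
  constructor
  intro M
  induction M using Multiset.induction with
  | empty =>
    constructor
    intro M' hM'
    obtain ⟨x, K, N, hdec, _, _⟩ := hM'
    exact absurd hdec.symm (Multiset.cons_ne_zero)
  | cons a M ih => exact acc_cons wflt a M ih

end

/-! ### Setup for the CRM theorem -/

variable {A : Type*} (hd ar : A → A → Prop)

/-- `⇒ = → ∪ ⊢⊣`. -/
def SS (x y : A) : Prop := ar x y ∨ hd x y

/-- One conversion step `⋈`. -/
def CV (x y : A) : Prop := ar x y ∨ ar y x ∨ hd x y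

/-- `⊢⊣* ∘ → ∘ ⊢⊣*`. -/
def DD (x y : A) : Prop := ∃ p q, ReflTransGen hd x p ∧ ar p q ∧ ReflTransGen hd q y

/-- `k` is smaller than `x`. -/
def Lt (k x : A) : Prop := TransGen (DD hd ar) x k

/-- Conversions between `a` and `b`, carrying the multiset of all elements except the last. -/
inductive Conv (hd ar : A → A → Prop) : A → A → Multiset A → Prop
  | refl (a : A) : Conv hd ar a a 0
  | cons {a x b : A} {M : Multiset A} :
      CV hd ar a x → Conv hd ar x b M → Conv hd ar a b (a ::ₘ M)

/-- Conversions consisting only of backward `ar`-steps. -/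
inductive C3 (hd ar : A → A → Prop) : A → A → Multiset A → Prop
  | refl (a : A) : C3 hd ar a a 0
  | cons {x y b : A} {M : Multiset A} : ar y x → C3 hd ar y b M → C3 hd ar x b (x ::ₘ M)

/-- `hd`-steps followed by backward `ar`-steps. -/
inductive C2 (hd ar : A → A → Prop) : A → A → Multiset A → Prop
  | base {a b : A} {M : Multiset A} : C3 hd ar a b M → C2 hd ar a b M
  | cons {x y b : A} {M : Multiset A} : hd x y → C2 hd ar y b M → C2 hd ar x b (x ::ₘ M)

/-- Valley-form conversions: `ar`-steps, then `hd`-steps, then backward `ar`-steps. -/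
inductive C1 (hd ar : A → A → Prop) : A → A → Multiset A → Prop
  | base {a b : A} {M : Multiset A} : C2 hd ar a b M → C1 hd ar a b M
  | cons {x y b : A} {M : Multiset A} : ar x y → C1 hd ar y b M → C1 hd ar x b (x ::ₘ M)

variable {hd ar}

theorem c3_val {a b : A} {M : Multiset A} (h : C3 hd ar a b M) : ReflTransGen ar b a := by
  induction h with
  | refl a => exact ReflTransGen.refl
  | cons hyx _ ih => exact ih.tail hyx

theorem c2_val {a b : A} {M : Multiset A} (h : C2 hd ar a b M) :
    ∃ v, ReflTransGen hd a v ∧ ReflTransGen ar b v := by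
  induction h with
  | base h3 => exact ⟨_, ReflTransGen.refl, c3_val h3⟩
  | cons hxy _ ih => obtain ⟨v, h1, h2⟩ := ih; exact ⟨v, h1.head hxy, h2⟩

theorem c1_val {a b : A} {M : Multiset A} (h : C1 hd ar a b M) :
    ∃ u v, ReflTransGen ar a u ∧ ReflTransGen hd u v ∧ ReflTransGen ar b v := by
  induction h with
  | base h2 => obtain ⟨v, h1, h2⟩ := c2_val h2; exact ⟨_, v, ReflTransGen.refl, h1, h2⟩
  | cons hxy _ ih =>
    obtain ⟨u, v, h1, h2, h3⟩ := ih; exact ⟨u, v, h1.head hxy, h2, h3⟩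

theorem c3_conv {a b : A} {M : Multiset A} (h : C3 hd ar a b M) : Conv hd ar a b M := by
  induction h with
  | refl a => exact Conv.refl a
  | cons hyx _ ih => exact Conv.cons (Or.inr (Or.inl hyx)) ih

theorem c2_conv {a b : A} {M : Multiset A} (h : C2 hd ar a b M) : Conv hd ar a b M := by
  induction h with
  | base h3 => exact c3_conv h3
  | cons hxy _ ih => exact Conv.cons (Or.inr (Or.inr hxy)) ih

theorem c1_conv {a b : A} {M : Multiset A} (h : C1 hd ar a b M) : Conv hd ar a b M := by
  induction h with
  | base h2 => exact c2_conv h2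
  | cons hxy _ ih => exact Conv.cons (Or.inl hxy) ih

theorem conv_append {a t b : A} {M1 M2 : Multiset A}
    (h1 : Conv hd ar a t M1) (h2 : Conv hd ar t b M2) : Conv hd ar a b (M1 + M2) := by
  induction h1 with
  | refl a => simpa using h2
  | cons hs _ ih => rw [Multiset.cons_add]; exact Conv.cons hs (ih h2)

theorem convF {a t : A} (h : ReflTransGen (SS hd ar) a t) :
    ∃ M, Conv hd ar a t M ∧ ∀ z ∈ M, ReflTransGen (SS hd ar) a z := by
  induction h using ReflTransGen.head_induction_on with
  | refl => exact ⟨0, Conv.refl t, by simp⟩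
  | head hs _ ih =>
    obtain ⟨M, hc, hM⟩ := ih
    refine ⟨_ ::ₘ M, Conv.cons ?_ hc, ?_⟩
    · rcases hs with h | h
      · exact Or.inl h
      · exact Or.inr (Or.inr h)
    · intro z hz
      rcases Multiset.mem_cons.mp hz with rfl | hz
      · exact ReflTransGen.refl
      · exact ReflTransGen.head hs (hM z hz)

theorem convR (hsym : ∀ a b, hd a b → hd b a) {c t : A} (h : ReflTransGen (SS hd ar) c t) :
    ∃ M, Conv hd ar t c M ∧ ∀ z ∈ M, ReflTransGen (SS hd ar) c z := by
  induction h with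
  | refl => exact ⟨0, Conv.refl c, by simp⟩
  | tail h1 h2 ih =>
    obtain ⟨M, hc, hM⟩ := ih
    refine ⟨_ ::ₘ M, Conv.cons ?_ hc, ?_⟩
    · rcases h2 with h | h
      · exact Or.inr (Or.inl h)
      · exact Or.inr (Or.inr (hsym _ _ h))
    · intro z hz
      rcases Multiset.mem_cons.mp hz with rfl | hz
      · exact h1.tail h2
      · exact hM z hz

theorem DD_hd {p q r : A} (h : DD hd ar p q) (h2 : ReflTransGen hd q r) : DD hd ar p r := by
  obtain ⟨u, v, h1, h3, h4⟩ := h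
  exact ⟨u, v, h1, h3, h4.trans h2⟩

theorem lt_extend {x p k : A} (h1 : TransGen (DD hd ar) x p)
    (h2 : ReflTransGen (SS hd ar) p k) : TransGen (DD hd ar) x k := by
  induction h2 with
  | refl => exact h1
  | tail _ hs ih =>
    rcases hs with har | hhd
    · exact ih.tail ⟨_, _, ReflTransGen.refl, har, ReflTransGen.refl⟩
    · obtain ⟨q, hq1, hq2⟩ := TransGen.tail'_iff.mp ih
      exact TransGen.tail' hq1 (DD_hd hq2 (ReflTransGen.single hhd))

/-- single DD step from an `ar` step with `hd*` around it -/
theorem lt_of_step {x p q k : A} (h1 : ReflTransGen hd x p) (h2 : ar p q)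
    (h3 : ReflTransGen (SS hd ar) q k) : Lt hd ar k x :=
  lt_extend (TransGen.single ⟨p, q, h1, h2, ReflTransGen.refl⟩) h3

/-- The key step: any conversion is either in valley form, or can be replaced by a
    conversion with strictly smaller multiset. -/
theorem find (hsym : ∀ a b, hd a b → hd b a)
    (hpeak : ∀ a b c, ar b a → ar b c →
      ∃ u, ReflTransGen (SS hd ar) a u ∧ ReflTransGen (SS hd ar) c u)
    (hcliff : ∀ a b c, hd a b → ar b c →
      ∃ w u, ar a w ∧ ReflTransGen (SS hd ar) w u ∧ ReflTransGen (SS hd ar) c u)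
    {a b : A} {M : Multiset A} (h : Conv hd ar a b M) :
    C1 hd ar a b M ∨ ∃ M', TransGen (MLt (Lt hd ar)) M' M ∧ Conv hd ar a b M' := by
  induction h with
  | refl a => exact Or.inl (C1.base (C2.base (C3.refl a)))
  | @cons a x b M0 hax htail ih =>
    rcases ih with hc1 | ⟨M0', hlt, hconv⟩
    swap
    · exact Or.inr ⟨a ::ₘ M0', TransGen.lift _ (fun _ _ h => MLt.cons a h) _ _ hlt,
        Conv.cons hax hconv⟩
    rcases hax with har | hbar | hhd
    · -- forward ar step: prepend
      exact Or.inl (C1.cons har hc1)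
    · -- backward ar step : ar x a
      cases hc1 with
      | @cons _ x1 _ M0' hxx1 hc1' =>
        -- peak : a ← x → x1
        obtain ⟨t, h1, h2⟩ := hpeak a x x1 hbar hxx1
        obtain ⟨Ma, hconva, hMa⟩ := convF h1
        obtain ⟨Mt, hconvt, hMt⟩ := convR hsym h2
        refine Or.inr ⟨Ma + (Mt + M0'),
          TransGen.head ⟨x, Ma + Mt, M0', rfl, (add_assoc Ma Mt M0').symm, ?_⟩
            (TransGen.single (MLt.erase a _)),
          conv_append hconva (conv_append hconvt (c1_conv hc1'))⟩
        intro k hk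
        rcases Multiset.mem_add.mp hk with hk | hk
        · exact lt_of_step ReflTransGen.refl hbar (hMa k hk)
        · exact lt_of_step ReflTransGen.refl hxx1 (hMt k hk)
      | base hc2 =>
        cases hc2 with
        | @cons _ x1 _ M0' hxx1 hc2' =>
          -- mirrored cliff : a ← x ⊢⊣ x1
          obtain ⟨w, t, hx1w, h1, h2⟩ := hcliff x1 x a (hsym x x1 hxx1) hbar
          obtain ⟨Ma, hconva, hMa⟩ := convF h2
          obtain ⟨Mw, hconvw, hMw⟩ := convR hsym h1
          have hwx1 : Conv hd ar w x1 (w ::ₘ 0) :=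
            Conv.cons (Or.inr (Or.inl hx1w)) (Conv.refl x1)
          refine Or.inr ⟨Ma + (Mw + ((w ::ₘ 0) + M0')),
            TransGen.head ⟨x, Ma + (Mw + (w ::ₘ 0)), M0', rfl, by simp [add_assoc], ?_⟩
              (TransGen.single (MLt.erase a _)),
            conv_append hconva (conv_append hconvw (conv_append hwx1 (c2_conv hc2')))⟩
          intro k hk
          rcases Multiset.mem_add.mp hk with hk | hk
          · exact lt_of_step ReflTransGen.refl hbar (hMa k hk)
          rcases Multiset.mem_add.mp hk with hk | hk
          · exact lt_of_step (ReflTransGen.single hxx1) hx1w (hMw k hk)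
          · rcases Multiset.mem_cons.mp hk with rfl | hk
            · exact lt_of_step (ReflTransGen.single hxx1) hx1w ReflTransGen.refl
            · simp at hk
        | base hc3 =>
          exact Or.inl (C1.base (C2.base (C3.cons hbar hc3)))
    · -- hd step : hd a x
      cases hc1 with
      | @cons _ x1 _ M0' hxx1 hc1' =>
        -- cliff : a ⊢⊣ x → x1
        obtain ⟨w, t, haw, h1, h2⟩ := hcliff a x x1 hhd hxx1
        obtain ⟨Mw, hconvw, hMw⟩ := convF h1
        obtain ⟨Mt, hconvt, hMt⟩ := convR hsym h2
        refine Or.inr ⟨a ::ₘ (Mw + (Mt + M0')),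
          TransGen.single ⟨x, Mw + Mt, a ::ₘ M0', Multiset.cons_swap a x M0',
            by simp [Multiset.add_cons, add_assoc], ?_⟩,
          Conv.cons (Or.inl haw)
            (conv_append hconvw (conv_append hconvt (c1_conv hc1')))⟩
        intro k hk
        rcases Multiset.mem_add.mp hk with hk | hk
        · exact lt_of_step (ReflTransGen.single (hsym a x hhd)) haw (hMw k hk)
        · exact lt_of_step ReflTransGen.refl hxx1 (hMt k hk)
      | base hc2 =>
        exact Or.inl (C1.base (C2.cons hhd hc2))

theorem wf_flip_DD
    (hwf : ¬ ∃ f : ℕ → A, ∀ n, Relation.Comp ar (ReflTransGen hd) (f n) (f (n + 1))) :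
    WellFounded (flip (DD hd ar)) := by
  by_contra hnwf
  obtain ⟨x, hx⟩ : ∃ x, ¬ Acc (flip (DD hd ar)) x := by
    by_contra h
    push_neg at h
    exact hnwf ⟨h⟩
  have step : ∀ y : {a : A // ¬ Acc (flip (DD hd ar)) a},
      ∃ z : {a : A // ¬ Acc (flip (DD hd ar)) a}, DD hd ar y.1 z.1 := by
    rintro ⟨y, hy⟩
    obtain ⟨z, hz1, hz2⟩ := exists_not_acc_lt_of_not_acc hy
    exact ⟨⟨z, hz1⟩, hz2⟩
  choose nxt hnxt using step
  set g : ℕ → {a : A // ¬ Acc (flip (DD hd ar)) a} := fun n => nxt^[n] ⟨x, hx⟩ with hg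
  have hch : ∀ n : ℕ, DD hd ar (g n).1 (g (n + 1)).1 := by
    intro n
    have : g (n + 1) = nxt (g n) := by
      rw [hg]
      exact Function.iterate_succ_apply' nxt n _
    rw [this]
    exact hnxt (g n)
  choose p q h1 h2 h3 using hch
  exact hwf ⟨p, fun n => ⟨q n, h2 n, (h3 n).trans (h1 (n + 1))⟩⟩

theorem wf_Lt
    (hwf : ¬ ∃ f : ℕ → A, ∀ n, Relation.Comp ar (ReflTransGen hd) (f n) (f (n + 1))) :
    WellFounded (Lt hd ar) :=
  Subrelation.wf (fun {k x} h => (transGen_swap.mpr h : TransGen (flip (DD hd ar)) k x))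
    (wf_flip_DD hwf).transGen

theorem conv_of_rtg {a b : A} (h : ReflTransGen (CV hd ar) a b) :
    ∃ M, Conv hd ar a b M := by
  induction h using ReflTransGen.head_induction_on with
  | refl => exact ⟨0, Conv.refl b⟩
  | head hs _ ih => obtain ⟨M, hM⟩ := ih; exact ⟨_, Conv.cons hs hM⟩

/-- build a `DD`-cycle at `b0` from `b0 → c →* v ⊢⊣* t` -/
theorem cycleF {c v : A} (h : ReflTransGen ar c v) :
    ∀ {t : A}, ReflTransGen hd v t → ∀ {b0 : A}, ar b0 c → TransGen (DD hd ar) b0 t := by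
  induction h using ReflTransGen.head_induction_on with
  | refl =>
    intro t ht b0 hb0
    exact TransGen.single ⟨b0, v, ReflTransGen.refl, hb0, ht⟩
  | @head c c' hcc' _ ih =>
    intro t ht b0 hb0
    exact TransGen.head ⟨b0, c, ReflTransGen.refl, hb0, ReflTransGen.refl⟩ (ih ht hcc')

end CRMproof

open Relation CRMproof in
/-- Corollary 2.6: necessary and sufficient conditions for CRM
when `→ ∘ ⊢⊣*` is well-founded; `⇒ = → ∪ ⊢⊣`. -/
theorem crm_iff_criterion {A : Type*} (hd ar : A → A → Prop)
    (hsym : ∀ a b, hd a b → hd b a)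
    (hwf : ¬ ∃ f : ℕ → A, ∀ n,
      Relation.Comp ar (Relation.ReflTransGen hd) (f n) (f (n + 1))) :
    (∀ a b, Relation.ReflTransGen (fun x y => ar x y ∨ ar y x ∨ hd x y) a b →
      ∃ u v, Relation.ReflTransGen ar a u ∧ Relation.ReflTransGen hd u v ∧
        Relation.ReflTransGen ar b v)
    ↔
    ((∀ a b c, ar b a → ar b c →
      ∃ u, Relation.ReflTransGen (fun x y => ar x y ∨ hd x y) a u ∧
        Relation.ReflTransGen (fun x y => ar x y ∨ hd x y) c u) ∧
     (∀ a b c, hd a b → ar b c →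
      ∃ w u, ar a w ∧
        Relation.ReflTransGen (fun x y => ar x y ∨ hd x y) w u ∧
        Relation.ReflTransGen (fun x y => ar x y ∨ hd x y) c u)) := by
  constructor
  · intro h
    constructor
    · -- peak condition
      intro a b c hba hbc
      have hconv : ReflTransGen (CV hd ar) a c :=
        ReflTransGen.head (Or.inr (Or.inl hba)) (ReflTransGen.single (Or.inl hbc))
      obtain ⟨u, v, h1, h2, h3⟩ := h a c hconv
      exact ⟨v, (ReflTransGen.mono (fun x y h => Or.inl h) _ _ h1).trans (ReflTransGen.mono (fun x y h => Or.inr h) _ _ h2),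
        ReflTransGen.mono (fun x y h => Or.inl h) _ _ h3⟩
    · -- cliff condition
      intro a b c hab hbc
      have hconv : ReflTransGen (CV hd ar) a c :=
        ReflTransGen.head (Or.inr (Or.inr hab)) (ReflTransGen.single (Or.inl hbc))
      obtain ⟨u, v, h1, h2, h3⟩ := h a c hconv
      rcases h1.cases_head with rfl | ⟨a1, ha1, h1'⟩
      · -- a = u : derive a cycle at b, contradiction with well-foundedness
        exfalso
        have hva : ReflTransGen hd v a := (@ReflTransGen.symmetric _ hd ⟨fun x y => hsym x y⟩).symm _ _ h2
        have hvb : ReflTransGen hd v b := hva.tail hab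
        have hcyc : TransGen (DD hd ar) b b := cycleF h3 hvb hbc
        exact (wf_Lt hwf).asymmetric b b (hcyc : Lt hd ar b b) hcyc
      · exact ⟨a1, v, ha1,
          (ReflTransGen.mono (fun x y h => Or.inl h) _ _ h1').trans (ReflTransGen.mono (fun x y h => Or.inr h) _ _ h2),
          ReflTransGen.mono (fun x y h => Or.inl h) _ _ h3⟩
  · rintro ⟨hpeak, hcliff⟩
    intro a b hconv
    obtain ⟨M, hM⟩ := conv_of_rtg hconv
    clear hconv
    induction M using ((MLt.wf (wf_Lt hwf)).transGen).induction generalizing a b with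
    | _ M ih =>
      rcases find hsym hpeak hcliff hM with hc1 | ⟨M', hlt, hconv'⟩
      · exact c1_val hc1
      · exact ih M' hlt _ _ hconv'
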